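/- Any bounded nonincreasing probability density f on [0,∞) can be represented as a scale mixture of uniform densities: there exists a probability measure G on (0,∞) such that f(x) = ∫₀^∞ θ⁻¹ 1_{[0,θ]}(x) dG(θ) for almost every x ≥ 0. -/

import Mathlib

open MeasureTheory Set Real Filter Function Topology

section aux
variable {f : ℝ → ℝ}

/-- integrability from integral = 1 -/
lemma kw_integrable (hf_int : ∫ x in Set.Ioi (0:ℝ), f x = 1) :
    IntegrableOn f (Set.Ioi 0) := by
  by_contra h
  rw [MeasureTheory.integral_undef h] at hf_int
  norm_num at hf_int

lemma kw_mul_le_one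
    (hf_nonneg : ∀ x, 0 ≤ x → 0 ≤ f x)
    (hf_anti : AntitoneOn f (Set.Ici 0))
    (hf_int : ∫ x in Set.Ioi (0:ℝ), f x = 1) :
    ∀ b : ℝ, 0 < b → b * f b ≤ 1 := by
  intro b hb
  have hInt := kw_integrable hf_int
  have h1 : b * f b = ∫ _ in Set.Ioc (0:ℝ) b, f b := by
    simp [Real.volume_Ioc, ENNReal.toReal_ofReal hb.le, mul_comm]
    rw [max_eq_left hb.le, mul_comm]
  have h2 : (∫ _ in Set.Ioc (0:ℝ) b, f b) ≤ ∫ x in Set.Ioc (0:ℝ) b, f x := by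
    apply setIntegral_mono_on (integrableOn_const (by simp [Real.volume_Ioc]))
      (hInt.mono_set Set.Ioc_subset_Ioi_self) measurableSet_Ioc
    intro x hx
    exact hf_anti hx.1.le hb.le hx.2
  have h3 : (∫ x in Set.Ioc (0:ℝ) b, f x) ≤ ∫ x in Set.Ioi (0:ℝ), f x := by
    apply setIntegral_mono_set hInt
    · exact (ae_restrict_iff' measurableSet_Ioi).2
        (Filter.Eventually.of_forall fun x hx => hf_nonneg x hx.le)
    · exact HasSubset.Subset.eventuallyLE Set.Ioc_subset_Ioi_self
  linarith [hf_int ▸ (h1 ▸ h2.trans h3)]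

end aux

/-- Khinchine/Williamson: any bounded nonincreasing probability density on [0,∞)
is a scale mixture of uniform densities. -/
theorem decreasing_density_is_uniform_mixture
    (f : ℝ → ℝ)
    (hf_nonneg : ∀ x, 0 ≤ x → 0 ≤ f x)
    (hf_anti : AntitoneOn f (Set.Ici 0))
    (hf_bdd : ∃ M : ℝ, ∀ x, 0 ≤ x → f x ≤ M)
    (hf_int : ∫ x in Set.Ioi (0:ℝ), f x = 1) :
    ∃ G : Measure ℝ, IsProbabilityMeasure G ∧ G (Set.Ioi 0) = 1 ∧
      ∀ᵐ x : ℝ, 0 ≤ x →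
        f x = ∫ θ, (Set.Icc 0 θ).indicator (fun _ => θ⁻¹) x ∂G := by
  clear hf_bdd
  have hInt : IntegrableOn f (Set.Ioi 0) := kw_integrable hf_int
  have hmul : ∀ b : ℝ, 0 < b → b * f b ≤ 1 := kw_mul_le_one hf_nonneg hf_anti hf_int
  -- the monotone function whose Stieltjes measure gives the mixing measure (after scaling)
  set φ : ℝ → ℝ := fun x => -f (max x 0) with hφdef
  have hφ : Monotone φ := by
    intro x y hxy
    simp only [hφdef, neg_le_neg_iff]
    exact hf_anti (le_max_right x 0) (le_max_right y 0) (max_le_max hxy le_rfl)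
  set F : StieltjesFunction ℝ := hφ.stieltjesFunction with hFdef
  have hFeq : ∀ x, F x = rightLim φ x := fun x => hφ.stieltjesFunction_eq x
  have hφ_nonpos : ∀ x, φ x ≤ 0 := fun x => neg_nonpos.2 (hf_nonneg _ (le_max_right x 0))
  have hφ_le_F : ∀ x, φ x ≤ F x := fun x => (hFeq x) ▸ hφ.le_rightLim le_rfl
  have hF_nonpos : ∀ x, F x ≤ 0 := by
    intro x
    rw [hFeq x]
    exact (hφ.rightLim_le (lt_add_one x)).trans (hφ_nonpos _)
  -- F tends to 0 at +∞
  have hFtop : Tendsto F atTop (𝓝 (0:ℝ)) := by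
    have h1 : Tendsto (fun x : ℝ => -x⁻¹) atTop (𝓝 (0:ℝ)) := by
      simpa using (tendsto_inv_atTop_zero (𝕜 := ℝ)).neg
    refine tendsto_of_tendsto_of_tendsto_of_le_of_le' h1 tendsto_const_nhds ?_ ?_
    · filter_upwards [eventually_gt_atTop (0:ℝ)] with x hx
      have hfx : f x ≤ x⁻¹ := by
        have h := hmul x hx
        calc f x = x⁻¹ * (x * f x) := by field_simp
          _ ≤ x⁻¹ * 1 := by
            exact mul_le_mul_of_nonneg_left h (inv_nonneg.2 hx.le)
          _ = x⁻¹ := mul_one _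
      calc -x⁻¹ ≤ -f x := neg_le_neg hfx
        _ = φ x := by simp [hφdef, max_eq_left hx.le]
        _ ≤ F x := hφ_le_F x
    · exact Filter.Eventually.of_forall hF_nonpos
  -- continuity points of φ : rightLim and leftLim equal φ there
  have hcount : Set.Countable {x : ℝ | ¬ContinuousAt φ x} := hφ.countable_not_continuousAt
  have hFx : ∀ x : ℝ, ContinuousAt φ x → F x = φ x := by
    intro x hx
    rw [hFeq x]
    exact rightLim_eq_of_tendsto
      (hx.tendsto.mono_left nhdsWithin_le_nhds)
  have hleftF : ∀ x : ℝ, ContinuousAt φ x → leftLim F x = φ x := by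
    intro x hx
    have htφ : Tendsto φ (𝓝[<] x) (𝓝 (φ x)) := hx.tendsto.mono_left nhdsWithin_le_nhds
    have htF : Tendsto F (𝓝[<] x) (𝓝 (leftLim F x)) := F.mono.tendsto_leftLim x
    refine le_antisymm ?_ ?_
    · refine le_of_tendsto htF ?_
      filter_upwards [self_mem_nhdsWithin] with y hy
      rw [hFeq y]
      exact hφ.rightLim_le hy
    · exact le_of_tendsto_of_tendsto' htφ htF fun y => hφ_le_F y
  -- the Stieltjes measure, and values of μ (Ici x)
  set μ : Measure ℝ := F.measure with hμdef
  have hμIci : ∀ x : ℝ, ContinuousAt φ x → μ (Set.Ici x) = ENNReal.ofReal (f (max x 0)) := by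
    intro x hx
    rw [hμdef, F.measure_Ici hFtop x, hleftF x hx]
    simp [hφdef]
  -- mixing measure
  set G : Measure ℝ := μ.withDensity (fun θ => ENNReal.ofReal θ) with hGdef
  have hGIic : G (Set.Iic 0) = 0 := by
    rw [hGdef, withDensity_apply _ measurableSet_Iic]
    rw [setLIntegral_congr_fun measurableSet_Iic
      (fun θ (hθ : θ ∈ Set.Iic (0:ℝ)) =>
        ENNReal.ofReal_eq_zero.2 hθ)]
    simp
  -- total mass on (0,∞) via the layer cake formula
  have hGIoi : G (Set.Ioi 0) = 1 := by
    rw [hGdef, withDensity_apply _ measurableSet_Ioi]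
    have hlc := lintegral_eq_lintegral_meas_le (μ.restrict (Set.Ioi 0))
      ((ae_restrict_iff' measurableSet_Ioi).2
        (Filter.Eventually.of_forall fun θ (hθ : θ ∈ Set.Ioi (0:ℝ)) => le_of_lt hθ))
      measurable_id.aemeasurable
    have hbad : ∀ᵐ t : ℝ, ContinuousAt φ t := by
      rw [ae_iff]; exact hcount.measure_zero volume
    have hset : (∫⁻ t in Set.Ioi (0:ℝ), (μ.restrict (Set.Ioi 0)) {a : ℝ | t ≤ a})
        = ∫⁻ t in Set.Ioi (0:ℝ), ENNReal.ofReal (f t) := by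
      refine lintegral_congr_ae ?_
      filter_upwards [ae_restrict_mem measurableSet_Ioi, ae_restrict_of_ae hbad]
        with t ht hct
      have h1 : {a : ℝ | t ≤ a} = Set.Ici t := rfl
      have h2 : Set.Ici t ∩ Set.Ioi 0 = Set.Ici t :=
        Set.inter_eq_left.2 fun a ha => show (0:ℝ) < a from lt_of_lt_of_le ht ha
      rw [h1, Measure.restrict_apply measurableSet_Ici, h2, hμIci t hct,
        max_eq_left (le_of_lt ht)]
    have hlint : (∫⁻ θ in Set.Ioi (0:ℝ), ENNReal.ofReal θ ∂μ)
        = ∫⁻ θ, ENNReal.ofReal θ ∂(μ.restrict (Set.Ioi 0)) := rfl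
    rw [hlint, hlc, hset,
      ← ofReal_integral_eq_lintegral_ofReal hInt
        ((ae_restrict_iff' measurableSet_Ioi).2
          (Filter.Eventually.of_forall fun y hy => hf_nonneg y (le_of_lt hy))),
      hf_int, ENNReal.ofReal_one]
  refine ⟨G, ?_, hGIoi, ?_⟩
  · constructor
    rw [← Set.Iic_union_Ioi (a := (0:ℝ)),
      measure_union (Set.Iic_disjoint_Ioi le_rfl) measurableSet_Ioi, hGIic, hGIoi, zero_add]
  · have hbad : ∀ᵐ x : ℝ, ContinuousAt φ x := by
      rw [ae_iff]; exact hcount.measure_zero volume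
    have hzero : ∀ᵐ x : ℝ, x ≠ (0:ℝ) := by
      rw [ae_iff]
      simpa using Real.volume_singleton (a := 0)
    filter_upwards [hbad, hzero] with x hcx hx0 hxnn
    have hx : 0 < x := lt_of_le_of_ne hxnn (Ne.symm hx0)
    have hind : ∀ θ : ℝ, (Set.Icc 0 θ).indicator (fun _ => θ⁻¹) x
        = (Set.Ici x).indicator (fun t => t⁻¹) θ := by
      intro θ
      by_cases h : x ≤ θ
      · rw [Set.indicator_of_mem (Set.mem_Icc.2 ⟨hxnn, h⟩),
          Set.indicator_of_mem (Set.mem_Ici.mpr h) (fun t : ℝ => t⁻¹)]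
      · rw [Set.indicator_of_notMem (fun hc => h (Set.mem_Icc.1 hc).2),
          Set.indicator_of_notMem (fun hc => h (Set.mem_Ici.mp hc)) (fun t : ℝ => t⁻¹)]
    simp only [hind]
    have hnn : (0:ℝ → ℝ) ≤ᵐ[G] fun θ => (Set.Ici x).indicator (fun t => t⁻¹) θ :=
      Filter.Eventually.of_forall fun θ =>
        Set.indicator_nonneg (fun t ht => inv_nonneg.2 (le_of_lt (hx.trans_le ht))) θ
    have hm : AEStronglyMeasurable (fun θ => (Set.Ici x).indicator (fun t : ℝ => t⁻¹) θ) G :=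
      (measurable_inv.indicator measurableSet_Ici).aestronglyMeasurable
    rw [integral_eq_lintegral_of_nonneg_ae hnn hm, hGdef,
      lintegral_withDensity_eq_lintegral_mul _ ENNReal.measurable_ofReal
        (Measurable.ennreal_ofReal (measurable_inv.indicator measurableSet_Ici))]
    have hprod : ∀ θ : ℝ,
        ((fun θ => ENNReal.ofReal θ) * (fun θ =>
          ENNReal.ofReal ((Set.Ici x).indicator (fun t => t⁻¹) θ))) θ
        = (Set.Ici x).indicator (fun _ => (1:ENNReal)) θ := by
      intro θ
      simp only [Pi.mul_apply]
      by_cases h : θ ∈ Set.Ici x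
      · rw [Set.indicator_of_mem h, Set.indicator_of_mem h]
        have hθ : 0 < θ := hx.trans_le h
        rw [← ENNReal.ofReal_mul hθ.le, mul_inv_cancel₀ (ne_of_gt hθ), ENNReal.ofReal_one]
      · rw [Set.indicator_of_notMem h, Set.indicator_of_notMem h]
        simp
    rw [lintegral_congr hprod, lintegral_indicator measurableSet_Ici, setLIntegral_one,
      hμIci x hcx, max_eq_left hxnn, ENNReal.toReal_ofReal (hf_nonneg x hxnn)]
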